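/- Let a ∈ ℝ and let (x,y) : I → ℝ² be a differentiable solution on an open interval I containing 0 of the system x'(s) = 2 + 4x − 4ax² + 12xy, y'(s) = 8 − 3a − 14ax − 2axy − 8y². If φ(x(0),y(0)) = 0, where φ(x,y) = 1/4 + x − x² + ax³ + xy + x²y², then φ(x(s),y(s)) = 0 for all s ∈ I; i.e., the curve 1/4 + x − x² + ax³ + xy + x²y² = 0 consists of trajectories of the system and at suitable values of a presents a limit cycle. -/

import Mathlib

open Set

/-- If `F' = k · F` on `[0, b]` with `k` continuous and `F 0 = 0`, then `F b = 0`. -/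
lemma aux_gronwall_zero (F k : ℝ → ℝ) (b : ℝ) (hb : 0 ≤ b)
    (hF : ∀ t ∈ Set.Icc (0:ℝ) b, HasDerivAt F (k t * F t) t)
    (hk : ContinuousOn k (Set.Icc (0:ℝ) b)) (h0 : F 0 = 0) : F b = 0 := by
  obtain ⟨C, hC⟩ := isCompact_Icc.exists_bound_of_continuousOn hk
  have key := norm_le_gronwallBound_of_norm_deriv_right_le
    (f := F) (f' := fun t => k t * F t) (δ := 0) (K := C) (ε := 0) (a := 0) (b := b)
    (fun t ht => (hF t ht).continuousAt.continuousWithinAt)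
    (fun t ht => (hF t (Set.Ico_subset_Icc_self ht)).hasDerivWithinAt)
    (by simp [h0])
    (fun t ht => by
      have h1 : ‖k t * F t‖ = ‖k t‖ * ‖F t‖ := norm_mul _ _
      have h2 : ‖k t‖ * ‖F t‖ ≤ C * ‖F t‖ :=
        mul_le_mul_of_nonneg_right (hC t (Set.Ico_subset_Icc_self ht)) (norm_nonneg _)
      rw [h1, add_zero]; exact h2)
  have := key b (Set.right_mem_Icc.2 hb)
  rw [gronwallBound_ε0_δ0] at this
  have : ‖F b‖ ≤ 0 := this
  simpa using le_antisymm this (norm_nonneg _)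

theorem stmt_13 (a : ℝ)
    (I : Set ℝ) (hI : IsOpen I) (hIconn : IsPreconnected I) (h0 : (0 : ℝ) ∈ I)
    (x y : ℝ → ℝ)
    (hx : ∀ s ∈ I, HasDerivAt x
      (2 + 4 * x s - 4 * a * (x s) ^ 2 + 12 * x s * y s) s)
    (hy : ∀ s ∈ I, HasDerivAt y
      (8 - 3 * a - 14 * a * x s - 2 * a * x s * y s - 8 * (y s) ^ 2) s)
    (hinit : 1 / 4 + x 0 - (x 0) ^ 2 + a * (x 0) ^ 3 + x 0 * y 0
      + (x 0) ^ 2 * (y 0) ^ 2 = 0) :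
    ∀ s ∈ I, 1 / 4 + x s - (x s) ^ 2 + a * (x s) ^ 3 + x s * y s
      + (x s) ^ 2 * (y s) ^ 2 = 0 := by
  set F : ℝ → ℝ := fun t => 1 / 4 + x t - (x t) ^ 2 + a * (x t) ^ 3 + x t * y t
      + (x t) ^ 2 * (y t) ^ 2 with hFdef
  set k : ℝ → ℝ := fun t => 8 + 8 * y t - 12 * a * x t with hkdef
  have hxc : ContinuousOn x I := fun t ht => (hx t ht).continuousAt.continuousWithinAt
  have hyc : ContinuousOn y I := fun t ht => (hy t ht).continuousAt.continuousWithinAt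
  have hkc : ContinuousOn k I :=
    (continuousOn_const.add (continuousOn_const.mul hyc)).sub (continuousOn_const.mul hxc)
  have hF : ∀ s ∈ I, HasDerivAt F (k s * F s) s := by
    intro s hs
    have H1 := hx s hs
    have H2 := hy s hs
    have big : HasDerivAt F
        ((2 + 4 * x s - 4 * a * (x s) ^ 2 + 12 * x s * y s)
          - 2 * x s ^ 1 * (2 + 4 * x s - 4 * a * (x s) ^ 2 + 12 * x s * y s)
          + a * (3 * x s ^ 2 * (2 + 4 * x s - 4 * a * (x s) ^ 2 + 12 * x s * y s))
          + ((2 + 4 * x s - 4 * a * (x s) ^ 2 + 12 * x s * y s) * y s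
            + x s * (8 - 3 * a - 14 * a * x s - 2 * a * x s * y s - 8 * (y s) ^ 2))
          + ((2 * x s ^ 1 * (2 + 4 * x s - 4 * a * (x s) ^ 2 + 12 * x s * y s)) * (y s) ^ 2
            + (x s) ^ 2 * (2 * y s ^ 1
              * (8 - 3 * a - 14 * a * x s - 2 * a * x s * y s - 8 * (y s) ^ 2)))) s := by
      have h1 : HasDerivAt (fun t => 1 / 4 + x t)
          (2 + 4 * x s - 4 * a * (x s) ^ 2 + 12 * x s * y s) s := H1.const_add _
      exact ((((h1.sub (H1.pow 2)).add ((H1.pow 3).const_mul a)).add (H1.mul H2)).add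
        ((H1.pow 2).mul (H2.pow 2)))
    convert big using 1
    simp only [hkdef, hFdef]
    ring
  have hOC : I.OrdConnected := hIconn.ordConnected
  intro s hs
  rcases le_total 0 s with hpos | hneg
  · exact aux_gronwall_zero F k s hpos
      (fun t ht => hF t (hOC.out h0 hs ht))
      (hkc.mono (hOC.out h0 hs)) hinit
  · have hsub : Set.Icc s (0:ℝ) ⊆ I := hOC.out hs h0
    have hmem : ∀ t ∈ Set.Icc (0:ℝ) (-s), -t ∈ I := by
      intro t ht
      exact hsub ⟨by linarith [ht.2], by linarith [ht.1]⟩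
    have key := aux_gronwall_zero (fun t => F (-t)) (fun t => -(k (-t))) (-s)
      (by linarith)
      (fun t ht => by
        have : HasDerivAt (fun t => F (-t)) (k (-t) * F (-t) * -1) t :=
          (hF (-t) (hmem t ht)).comp t (hasDerivAt_neg t)
        convert this using 1
        ring)
      (by
        have : ContinuousOn (fun t : ℝ => k (-t)) (Set.Icc (0:ℝ) (-s)) :=
          (hkc.mono hsub).comp continuous_neg.continuousOn
            (fun t ht => ⟨by linarith [ht.2], by linarith [ht.1]⟩)
        exact this.neg)
      (by simpa only [neg_zero] using hinit)
    simpa only [neg_neg] using key
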